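/- Let β > 0 be irrational. Then the block averages of δ*_n tend to zero uniformly: for every ε > 0 there exists N₀ ∈ N such that for all integers m and all N > N₀, |(1/N)·∑_{n=mN+1}^{(m+1)N} δ*_n| < ε. -/

import Mathlib

open Complex Finset Set

noncomputable section WeylAux

/-- Integral of a circle function over one period. -/
private def circInt (f : C(AddCircle (1:ℝ), ℂ)) : ℂ := ∫ x in (0:ℝ)..1, f ↑x

/-- Uniform Weyl property: block sums approximate `N` times the integral, uniformly in the
starting phase `c`. -/
private def WeylProp (β : ℝ) (f : C(AddCircle (1:ℝ), ℂ)) : Prop :=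
  ∀ ε : ℝ, 0 < ε → ∃ N₀ : ℕ, ∀ c : ℝ, ∀ N : ℕ, N₀ < N →
    ‖(∑ j ∈ Finset.range N, f ((β * j + c : ℝ) : AddCircle (1:ℝ)))
      - (N : ℂ) * circInt f‖ < ε * N

private lemma contComp (f : C(AddCircle (1:ℝ), ℂ)) : Continuous fun x : ℝ => f ↑x :=
  f.continuous.comp (AddCircle.continuous_mk' 1)

private lemma weyl_zero (β : ℝ) : WeylProp β 0 := by
  intro ε hε
  refine ⟨0, fun c N hN => ?_⟩
  have hN' : (0:ℝ) < N := by exact_mod_cast hN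
  simp only [ContinuousMap.zero_apply, Finset.sum_const_zero, circInt, mul_zero,
    intervalIntegral.integral_zero, sub_zero, norm_zero]
  positivity

private lemma weyl_add (β : ℝ) (f g : C(AddCircle (1:ℝ), ℂ)) (hf : WeylProp β f)
    (hg : WeylProp β g) : WeylProp β (f + g) := by
  intro ε hε
  obtain ⟨N₁, h₁⟩ := hf (ε/2) (by positivity)
  obtain ⟨N₂, h₂⟩ := hg (ε/2) (by positivity)
  refine ⟨max N₁ N₂, fun c N hN => ?_⟩
  have e1 := h₁ c N (lt_of_le_of_lt (le_max_left _ _) hN)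
  have e2 := h₂ c N (lt_of_le_of_lt (le_max_right _ _) hN)
  have hint : circInt (f + g) = circInt f + circInt g := by
    simp only [circInt, ContinuousMap.add_apply]
    exact intervalIntegral.integral_add ((contComp f).intervalIntegrable _ _)
      ((contComp g).intervalIntegrable _ _)
  calc ‖(∑ j ∈ Finset.range N, (f + g) ((β * j + c : ℝ) : AddCircle (1:ℝ)))
      - (N : ℂ) * circInt (f + g)‖
      = ‖((∑ j ∈ Finset.range N, f ((β * j + c : ℝ) : AddCircle (1:ℝ))) - (N:ℂ) * circInt f)
        + ((∑ j ∈ Finset.range N, g ((β * j + c : ℝ) : AddCircle (1:ℝ))) - (N:ℂ) * circInt g)‖ := by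
        rw [hint]; simp only [ContinuousMap.add_apply, Finset.sum_add_distrib]; congr 1; ring
    _ ≤ _ + _ := norm_add_le _ _
    _ < ε/2 * N + ε/2 * N := add_lt_add e1 e2
    _ = ε * N := by ring

private lemma weyl_smul (β : ℝ) (a : ℂ) (f : C(AddCircle (1:ℝ), ℂ)) (hf : WeylProp β f) :
    WeylProp β (a • f) := by
  intro ε hε
  rcases eq_or_ne a 0 with rfl | ha
  · rw [show (0:ℂ) • f = 0 from by ext x; simp]
    exact weyl_zero β ε hε
  have hna : (0:ℝ) < ‖a‖ := norm_pos_iff.mpr ha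
  obtain ⟨N₀, h₀⟩ := hf (ε / ‖a‖) (div_pos hε hna)
  refine ⟨N₀, fun c N hN => ?_⟩
  have hint : circInt (a • f) = a * circInt f := by
    simp only [circInt, ContinuousMap.smul_apply, smul_eq_mul]
    rw [intervalIntegral.integral_const_mul]
  have : (∑ j ∈ Finset.range N, (a • f) ((β * j + c : ℝ) : AddCircle (1:ℝ)))
      - (N : ℂ) * circInt (a • f)
      = a * ((∑ j ∈ Finset.range N, f ((β * j + c : ℝ) : AddCircle (1:ℝ))) - (N:ℂ) * circInt f) := by
    rw [hint]; simp only [ContinuousMap.smul_apply, smul_eq_mul, ← Finset.mul_sum]; ring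
  rw [this, norm_mul]
  calc ‖a‖ * ‖_‖ < ‖a‖ * (ε / ‖a‖ * N) := by
        exact mul_lt_mul_of_pos_left (h₀ c N hN) (norm_pos_iff.mpr ha)
    _ = ε * N := by
        rw [div_mul_eq_mul_div, mul_comm]
        exact div_mul_cancel₀ _ (ne_of_gt hna)

private lemma circInt_fourier_zero : circInt (fourier 0 : C(AddCircle (1:ℝ), ℂ)) = 1 := by
  simp [circInt, fourier_zero]

private lemma circInt_fourier (k : ℤ) (hk : k ≠ 0) :
    circInt (fourier k : C(AddCircle (1:ℝ), ℂ)) = 0 := by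
  have hc : (2 * (Real.pi:ℂ) * I * k) ≠ 0 := by
    simp [Real.pi_ne_zero, hk, I_ne_zero]
  have h1 : ∀ x : ℝ, (fourier k : C(AddCircle (1:ℝ), ℂ)) ↑x
      = Complex.exp ((2 * (Real.pi:ℂ) * I * k) * x) := by
    intro x
    rw [fourier_coe_apply]
    push_cast
    ring_nf
  simp only [circInt, h1]
  rw [integral_exp_mul_complex hc]
  have h2 : (2 * (Real.pi:ℂ) * I * k) * (1:ℝ) = (k:ℂ) * (2 * Real.pi * I) := by
    push_cast; ring
  have h3 : (2 * (Real.pi:ℂ) * I * k) * (0:ℝ) = 0 := by push_cast; ring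
  rw [h2, h3, Complex.exp_int_mul_two_pi_mul_I, Complex.exp_zero, sub_self, zero_div]

private lemma weyl_fourier (β : ℝ) (hβ : Irrational β) (k : ℤ) : WeylProp β (fourier k) := by
  rcases eq_or_ne k 0 with rfl | hk
  · intro ε hε
    refine ⟨0, fun c N hN => ?_⟩
    have hN' : (0:ℝ) < N := by exact_mod_cast hN
    simp only [fourier_zero, Finset.sum_const, Finset.card_range, circInt_fourier_zero, mul_one,
      nsmul_eq_mul, mul_one, sub_self, norm_zero]
    positivity
  · intro ε hε
    set z : ℂ := Complex.exp ((2 * (Real.pi:ℂ) * I * k) * β) with hz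
    have hz1 : z ≠ 1 := by
      intro h
      rw [hz] at h
      rw [Complex.exp_eq_one_iff] at h
      obtain ⟨n, hn⟩ := h
      have h2 : (2 * (Real.pi:ℂ) * I) * ((k:ℂ) * β - n) = 0 := by
        rw [mul_sub, sub_eq_zero]
        rw [show (2 * (Real.pi:ℂ) * I) * ((k:ℂ) * β) = 2 * (Real.pi:ℂ) * I * (k:ℂ) * β by ring]
        rw [show (2 * (Real.pi:ℂ) * I * (k:ℂ) * (β:ℂ)) = (2 * (Real.pi:ℂ) * I * (k:ℂ)) * β by ring,
          hn]
        ring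
      have h3 : (2 * (Real.pi:ℂ) * I) ≠ 0 := by
        simp [Real.pi_ne_zero, I_ne_zero]
      have h4 : (k:ℂ) * β = n := by
        rcases mul_eq_zero.mp h2 with h | h
        · exact absurd h h3
        · linear_combination h
      have h5 : (k:ℝ) * β = (n:ℝ) := by
        have := congrArg Complex.re h4
        simpa using this
      exact (hβ.intCast_mul hk).ne_int n h5
    have hzd : (0:ℝ) < ‖z - 1‖ := by
      rw [norm_pos_iff, sub_ne_zero]; exact hz1
    refine ⟨⌈(2 / ‖z - 1‖) / ε⌉₊, fun c N hN => ?_⟩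
    have hNb : (2 / ‖z - 1‖) / ε < (N:ℝ) := by
      calc (2 / ‖z - 1‖) / ε ≤ (⌈(2 / ‖z - 1‖) / ε⌉₊ : ℝ) := Nat.le_ceil _
        _ < N := by exact_mod_cast hN
    have hNe : 2 / ‖z - 1‖ < ε * N := by
      rw [div_lt_iff₀ hε] at hNb
      linarith [hNb]
    have habsz : ‖z‖ = 1 := by
      rw [hz, show (2 * (Real.pi:ℂ) * I * (k:ℂ) * (β:ℂ))
        = ((2 * Real.pi * k * β : ℝ):ℂ) * I by push_cast; ring]
      exact Complex.norm_exp_ofReal_mul_I _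
    have hsum : ∑ j ∈ Finset.range N,
        (fourier k : C(AddCircle (1:ℝ), ℂ)) ((β * j + c : ℝ) : AddCircle (1:ℝ))
        = Complex.exp ((2 * (Real.pi:ℂ) * I * k) * c) * ((z ^ N - 1) / (z - 1)) := by
      rw [← geom_sum_eq hz1, Finset.mul_sum]
      refine Finset.sum_congr rfl fun j _ => ?_
      rw [fourier_coe_apply, hz, ← Complex.exp_nat_mul, ← Complex.exp_add]
      congr 1
      push_cast
      ring
    rw [circInt_fourier k hk, mul_zero, sub_zero, hsum, norm_mul]
    have h6 : ‖Complex.exp ((2 * (Real.pi:ℂ) * I * k) * c)‖ = 1 := by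
      rw [show ((2 * (Real.pi:ℂ) * I * k) * (c:ℂ)) = ((2 * Real.pi * k * c : ℝ):ℂ) * I by
        push_cast; ring]
      exact Complex.norm_exp_ofReal_mul_I _
    rw [h6, one_mul, norm_div]
    calc ‖z ^ N - 1‖ / ‖z - 1‖ ≤ 2 / ‖z - 1‖ := by
          have hb : ‖z ^ N - 1‖ ≤ 2 := by
            calc ‖z ^ N - 1‖ ≤ ‖z ^ N‖ + ‖(1:ℂ)‖ := norm_sub_le _ _
              _ = 2 := by
                rw [norm_pow]
                rw [show ‖z‖ = 1 from habsz]
                norm_num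
          exact div_le_div_of_nonneg_right hb hzd.le
      _ < ε * N := hNe

private lemma weyl_span (β : ℝ) (hβ : Irrational β) (f : C(AddCircle (1:ℝ), ℂ))
    (hf : f ∈ Submodule.span ℂ (Set.range (@fourier 1))) : WeylProp β f := by
  induction hf using Submodule.span_induction with
  | mem x hx => obtain ⟨k, rfl⟩ := hx; exact weyl_fourier β hβ k
  | zero => exact weyl_zero β
  | add x y _ _ hx hy => exact weyl_add β x y hx hy
  | smul a x _ hx => exact weyl_smul β a x hx

private lemma weyl_all (β : ℝ) (hβ : Irrational β) (f : C(AddCircle (1:ℝ), ℂ)) : WeylProp β f := by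
  intro ε hε
  have hmem : f ∈ closure ((Submodule.span ℂ (Set.range (@fourier 1)) : Submodule ℂ _) : Set _) := by
    have h := span_fourier_closure_eq_top (T := 1)
    have : f ∈ (Submodule.span ℂ (Set.range (@fourier 1))).topologicalClosure := by
      rw [h]; trivial
    exact this
  rw [Metric.mem_closure_iff] at hmem
  obtain ⟨g, hg, hdist⟩ := hmem (ε/3) (by positivity)
  obtain ⟨N₀, h₀⟩ := weyl_span β hβ g hg (ε/3) (by positivity)
  refine ⟨N₀, fun c N hN => ?_⟩
  have hNpos : (0:ℝ) < N := by
    have : 0 < N := Nat.pos_of_ne_zero (by omega)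
    exact_mod_cast this
  have key := h₀ c N hN
  have hpt : ∀ y : AddCircle (1:ℝ), ‖f y - g y‖ ≤ ε/3 := by
    intro y
    calc ‖f y - g y‖ = dist (f y) (g y) := (dist_eq_norm _ _).symm
      _ ≤ dist f g := ContinuousMap.dist_apply_le_dist y
      _ ≤ ε/3 := hdist.le
  have hsumdiff : ‖(∑ j ∈ Finset.range N, f ((β * j + c : ℝ) : AddCircle (1:ℝ)))
      - ∑ j ∈ Finset.range N, g ((β * j + c : ℝ) : AddCircle (1:ℝ))‖ ≤ (ε/3) * N := by
    rw [← Finset.sum_sub_distrib]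
    calc ‖∑ j ∈ Finset.range N, (f ((β * j + c : ℝ) : AddCircle (1:ℝ))
          - g ((β * j + c : ℝ) : AddCircle (1:ℝ)))‖
        ≤ ∑ j ∈ Finset.range N, ‖f ((β * j + c : ℝ) : AddCircle (1:ℝ))
          - g ((β * j + c : ℝ) : AddCircle (1:ℝ))‖ := norm_sum_le _ _
      _ ≤ ∑ _j ∈ Finset.range N, (ε/3) := Finset.sum_le_sum fun j _ => hpt _
      _ = (ε/3) * N := by simp [mul_comm]
  have hintdiff : ‖circInt f - circInt g‖ ≤ ε/3 := by
    have : circInt f - circInt g = ∫ x in (0:ℝ)..1, (f ↑x - g ↑x) := by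
      rw [intervalIntegral.integral_sub ((contComp f).intervalIntegrable _ _)
        ((contComp g).intervalIntegrable _ _)]
      rfl
    rw [this]
    have := intervalIntegral.norm_integral_le_of_norm_le_const
      (a := (0:ℝ)) (b := 1) (C := ε/3) (f := fun x => f ↑x - g ↑x) (fun x _ => hpt _)
    simpa using this
  calc ‖(∑ j ∈ Finset.range N, f ((β * j + c : ℝ) : AddCircle (1:ℝ))) - (N:ℂ) * circInt f‖
      = ‖((∑ j ∈ Finset.range N, f ((β * j + c : ℝ) : AddCircle (1:ℝ)))
          - ∑ j ∈ Finset.range N, g ((β * j + c : ℝ) : AddCircle (1:ℝ)))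
        + ((∑ j ∈ Finset.range N, g ((β * j + c : ℝ) : AddCircle (1:ℝ))) - (N:ℂ) * circInt g)
        + ((N:ℂ) * (circInt g - circInt f))‖ := by congr 1; ring
    _ ≤ ‖((∑ j ∈ Finset.range N, f ((β * j + c : ℝ) : AddCircle (1:ℝ)))
          - ∑ j ∈ Finset.range N, g ((β * j + c : ℝ) : AddCircle (1:ℝ)))
        + ((∑ j ∈ Finset.range N, g ((β * j + c : ℝ) : AddCircle (1:ℝ))) - (N:ℂ) * circInt g)‖
        + ‖(N:ℂ) * (circInt g - circInt f)‖ := norm_add_le _ _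
    _ ≤ ‖(∑ j ∈ Finset.range N, f ((β * j + c : ℝ) : AddCircle (1:ℝ)))
          - ∑ j ∈ Finset.range N, g ((β * j + c : ℝ) : AddCircle (1:ℝ))‖
        + ‖(∑ j ∈ Finset.range N, g ((β * j + c : ℝ) : AddCircle (1:ℝ))) - (N:ℂ) * circInt g‖
        + ‖(N:ℂ) * (circInt g - circInt f)‖ := by
        gcongr
        exact norm_add_le _ _
    _ < (ε/3) * N + (ε/3) * N + (ε/3) * N := by
        have h3 : ‖(N:ℂ) * (circInt g - circInt f)‖ ≤ (ε/3) * N := by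
          rw [norm_mul]
          have hn : ‖(N:ℂ)‖ = (N:ℝ) := by simp
          rw [hn, mul_comm]
          have : ‖circInt g - circInt f‖ ≤ ε/3 := by rw [norm_sub_rev]; exact hintdiff
          exact mul_le_mul_of_nonneg_right this hNpos.le
        have := add_lt_add_of_le_of_lt hsumdiff key
        linarith [h3]
    _ = ε * N := by ring

/-- Uniform Weyl equidistribution for a continuous real periodic function. -/
private lemma weylR (β : ℝ) (hβ : Irrational β) (q : ℝ → ℝ) (hq : Continuous q)
    (hper : q 0 = q 1) (ε : ℝ) (hε : 0 < ε) :
    ∃ N₀ : ℕ, ∀ c : ℝ, ∀ N : ℕ, N₀ < N →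
      |(∑ j ∈ Finset.range N, q (Int.fract (β * j + c))) - N * ∫ x in (0:ℝ)..1, q x| < ε * N := by
  have hper' : q 0 = q (0 + 1) := by rwa [zero_add]
  have hlift : Continuous (AddCircle.liftIco 1 0 q) :=
    AddCircle.liftIco_continuous hper' hq.continuousOn
  set F : C(AddCircle (1:ℝ), ℂ) :=
    ⟨fun y => ((AddCircle.liftIco 1 0 q y : ℝ) : ℂ), Complex.continuous_ofReal.comp hlift⟩ with hFdef
  have hcoe : ∀ x : ℝ, ((x : ℝ) : AddCircle (1:ℝ)) = ((Int.fract x : ℝ) : AddCircle (1:ℝ)) := by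
    intro x
    have hfl : (((⌊x⌋ : ℝ)) : AddCircle (1:ℝ)) = 0 := by
      rw [AddCircle.coe_eq_zero_iff]
      exact ⟨⌊x⌋, by simp⟩
    calc ((x : ℝ) : AddCircle (1:ℝ)) = (((⌊x⌋ : ℝ) + Int.fract x : ℝ) : AddCircle (1:ℝ)) := by
          rw [Int.floor_add_fract]
      _ = (((⌊x⌋ : ℝ)) : AddCircle (1:ℝ)) + ((Int.fract x : ℝ) : AddCircle (1:ℝ)) := by
          push_cast; rfl
      _ = ((Int.fract x : ℝ) : AddCircle (1:ℝ)) := by rw [hfl, zero_add]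
  have hF : ∀ x : ℝ, F ((x:ℝ) : AddCircle (1:ℝ)) = ((q (Int.fract x) : ℝ) : ℂ) := by
    intro x
    have hmem : Int.fract x ∈ Set.Ico (0:ℝ) (0 + 1) := by
      rw [zero_add]
      exact ⟨Int.fract_nonneg x, Int.fract_lt_one x⟩
    rw [hFdef]
    simp only [ContinuousMap.coe_mk]
    rw [hcoe x, AddCircle.liftIco_coe_apply hmem]
  have hInt : circInt F = ((∫ x in (0:ℝ)..1, q x : ℝ) : ℂ) := by
    have h1 : circInt F = ∫ x in (0:ℝ)..1, ((q (Int.fract x) : ℝ) : ℂ) := by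
      unfold circInt
      exact intervalIntegral.integral_congr fun x _ => hF x
    rw [h1, intervalIntegral.integral_ofReal]
    congr 1
    apply intervalIntegral.integral_congr
    intro x hx
    rw [Set.uIcc_of_le (zero_le_one' ℝ)] at hx
    rcases eq_or_lt_of_le hx.2 with h1 | h1
    · simp only [h1, Int.fract_one]
      rw [hper]
    · simp [Int.fract_eq_self.mpr ⟨hx.1, h1⟩]
  obtain ⟨N₀, h₀⟩ := weyl_all β hβ F ε hε
  refine ⟨N₀, fun c N hN => ?_⟩
  have key := h₀ c N hN
  have hid : ((∑ j ∈ Finset.range N, q (Int.fract (β * j + c)))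
      - N * ∫ x in (0:ℝ)..1, q x : ℝ)
      = ((∑ j ∈ Finset.range N, F ((β * j + c : ℝ) : AddCircle (1:ℝ))) - (N:ℂ) * circInt F).re
      := by
    rw [hInt]
    simp only [hF]
    push_cast
    simp
  have hid2 : (((∑ j ∈ Finset.range N, q (Int.fract (β * j + c)))
      - N * ∫ x in (0:ℝ)..1, q x : ℝ) : ℂ)
      = (∑ j ∈ Finset.range N, F ((β * j + c : ℝ) : AddCircle (1:ℝ))) - (N:ℂ) * circInt F := by
    rw [hInt]
    simp only [hF]
    push_cast
    ring
  calc |(∑ j ∈ Finset.range N, q (Int.fract (β * j + c))) - N * ∫ x in (0:ℝ)..1, q x|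
      = ‖(((∑ j ∈ Finset.range N, q (Int.fract (β * j + c)))
        - N * ∫ x in (0:ℝ)..1, q x : ℝ) : ℂ)‖ := by
        rw [Complex.norm_real, Real.norm_eq_abs]
    _ = ‖(∑ j ∈ Finset.range N, F ((β * j + c : ℝ) : AddCircle (1:ℝ))) - (N:ℂ) * circInt F‖ := by
        rw [hid2]
    _ < ε * N := key

private lemma lin_int (a b u v : ℝ) :
    ∫ x in a..b, (u + v * x) = u * (b - a) + v * (b^2 - a^2) / 2 := by
  have h0 : IntervalIntegrable (fun _ : ℝ => u) MeasureTheory.volume a b :=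
    intervalIntegrable_const
  have h1 : IntervalIntegrable (fun x : ℝ => v * x) MeasureTheory.volume a b :=
    Continuous.intervalIntegrable (by fun_prop) _ _
  rw [intervalIntegral.integral_add h0 h1, intervalIntegral.integral_const,
    intervalIntegral.integral_const_mul, integral_id]
  simp [smul_eq_mul]
  ring

set_option maxHeartbeats 1000000 in
/-- Uniform equidistribution of the sawtooth `fract − 1/2` along an irrational rotation. -/
private lemma key_sawtooth (β : ℝ) (hβ : Irrational β) (ε : ℝ) (hε : 0 < ε) :
    ∃ N₀ : ℕ, ∀ c : ℝ, ∀ N : ℕ, N₀ < N →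
      |∑ j ∈ Finset.range N, (Int.fract (β * j + c) - 1/2)| < ε * N := by
  set η : ℝ := min (ε/2) 1 with hηdef
  have hηpos : 0 < η := lt_min (by positivity) one_pos
  have hη1 : η ≤ 1 := min_le_right _ _
  have hηε : η ≤ ε/2 := min_le_left _ _
  set s : ℝ := (1 - η)/η with hsdef
  have hs : 0 ≤ s := div_nonneg (by linarith) hηpos.le
  have hsη : s * η = 1 - η := div_mul_cancel₀ _ (ne_of_gt hηpos)
  -- the majorant of y ↦ y - 1/2 on [0,1)
  set q : ℝ → ℝ := fun y => max (y - 1/2) (1/2 - y * s) with hqdef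
  -- the majorant of y ↦ 1/2 - y on [0,1)
  set q' : ℝ → ℝ := fun y => max (1/2 - y) ((η - 1/2) + (y - (1 - η)) * s) with hq'def
  have hqc : Continuous q :=
    (continuous_id.sub continuous_const).max
      (continuous_const.sub (continuous_id.mul continuous_const))
  have hq'c : Continuous q' :=
    (continuous_const.sub continuous_id).max
      (continuous_const.add ((continuous_id.sub continuous_const).mul continuous_const))
  have hqper : q 0 = q 1 := by
    have e0 : q 0 = 1/2 := by
      rw [hqdef]; simp only [zero_sub, zero_mul, sub_zero]
      rw [max_eq_right]; linarith
    have e1 : q 1 = 1/2 := by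
      rw [hqdef]; simp only [one_mul]
      rw [max_eq_left]; norm_num; linarith
    rw [e0, e1]
  have hq'per : q' 0 = q' 1 := by
    have e0 : q' 0 = 1/2 := by
      rw [hq'def]; simp only [sub_zero, zero_sub]
      rw [max_eq_left]
      have : (-(1-η)) * s ≤ 0 := mul_nonpos_of_nonpos_of_nonneg (by linarith) hs
      linarith
    have e1 : q' 1 = 1/2 := by
      rw [hq'def]; simp only
      rw [max_eq_right]
      · have : (1 - (1 - η)) * s = 1 - η := by rw [show (1 - (1-η)) = η by ring, mul_comm, hsη]
        linarith
      · have : (1 - (1 - η)) * s = 1 - η := by rw [show (1 - (1-η)) = η by ring, mul_comm, hsη]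
        linarith
    rw [e0, e1]
  -- integral of q
  have hqint : ∫ x in (0:ℝ)..1, q x = η/2 := by
    have e1 : ∀ x ∈ Set.uIcc (0:ℝ) η, q x = 1/2 - x * s := by
      intro x hx
      rw [Set.uIcc_of_le hηpos.le] at hx
      rw [hqdef]
      apply max_eq_right
      nlinarith [hx.1, hx.2, hsη, hs]
    have e2 : ∀ x ∈ Set.uIcc η (1:ℝ), q x = x - 1/2 := by
      intro x hx
      rw [Set.uIcc_of_le hη1] at hx
      rw [hqdef]
      apply max_eq_left
      nlinarith [hx.1, hx.2, hsη, hs]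
    have i1 : ∫ x in (0:ℝ)..η, q x = η/2 - η^2/2 * s := by
      have : ∫ x in (0:ℝ)..η, q x = ∫ x in (0:ℝ)..η, ((1/2) + (-s) * x) := by
        apply intervalIntegral.integral_congr
        intro x hx
        rw [e1 x hx]; ring
      rw [this, lin_int]
      ring
    have i2 : ∫ x in η..(1:ℝ), q x = (1 - η^2)/2 - (1 - η)/2 := by
      have : ∫ x in η..(1:ℝ), q x = ∫ x in η..(1:ℝ), ((-(1/2)) + 1 * x) := by
        apply intervalIntegral.integral_congr
        intro x hx
        rw [e2 x hx]; ring
      rw [this, lin_int]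
      ring
    rw [← intervalIntegral.integral_add_adjacent_intervals
      (hqc.intervalIntegrable 0 η) (hqc.intervalIntegrable η 1), i1, i2]
    nlinarith [hsη]
  -- integral of q'
  have hq'int : ∫ x in (0:ℝ)..1, q' x = η/2 := by
    have e1 : ∀ x ∈ Set.uIcc (0:ℝ) (1-η), q' x = 1/2 - x := by
      intro x hx
      rw [Set.uIcc_of_le (by linarith : (0:ℝ) ≤ 1 - η)] at hx
      rw [hq'def]
      apply max_eq_left
      nlinarith [hx.1, hx.2, hsη, hs]
    have e2 : ∀ x ∈ Set.uIcc (1-η) (1:ℝ), q' x = (η - 1/2) + (x - (1 - η)) * s := by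
      intro x hx
      rw [Set.uIcc_of_le (by linarith : (1:ℝ) - η ≤ 1)] at hx
      rw [hq'def]
      apply max_eq_right
      nlinarith [hx.1, hx.2, hsη, hs]
    have i1 : ∫ x in (0:ℝ)..(1-η), q' x = (1-η)/2 - (1-η)^2/2 := by
      have : ∫ x in (0:ℝ)..(1-η), q' x = ∫ x in (0:ℝ)..(1-η), ((1/2) + (-1) * x) := by
        apply intervalIntegral.integral_congr
        intro x hx
        rw [e1 x hx]; ring
      rw [this, lin_int]
      ring
    have i2 : ∫ x in (1-η)..(1:ℝ), q' x
        = η * (η - 1/2) + ((1 - (1-η)^2)/2 - (1-η) * η) * s := by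
      have : ∫ x in (1-η)..(1:ℝ), q' x
          = ∫ x in (1-η)..(1:ℝ), ((η - 1/2 - (1-η) * s) + s * x) := by
        apply intervalIntegral.integral_congr
        intro x hx
        rw [e2 x hx]; ring
      rw [this, lin_int]
      ring
    rw [← intervalIntegral.integral_add_adjacent_intervals
      (hq'c.intervalIntegrable 0 (1-η)) (hq'c.intervalIntegrable (1-η) 1), i1, i2]
    nlinarith [hsη]
  have hmaj : ∀ y : ℝ, y - 1/2 ≤ q y := fun y => le_max_left _ _
  have hmaj' : ∀ y : ℝ, 1/2 - y ≤ q' y := fun y => le_max_left _ _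
  clear_value q q' s η
  obtain ⟨N₁, h₁⟩ := weylR β hβ q hqc hqper (ε/4) (by positivity)
  obtain ⟨N₂, h₂⟩ := weylR β hβ q' hq'c hq'per (ε/4) (by positivity)
  refine ⟨max N₁ N₂, fun c N hN => ?_⟩
  have hNpos : (0:ℝ) < N := by
    have : 0 < N := Nat.pos_of_ne_zero (by omega)
    exact_mod_cast this
  have k1 := h₁ c N (lt_of_le_of_lt (le_max_left _ _) hN)
  have k2 := h₂ c N (lt_of_le_of_lt (le_max_right _ _) hN)
  rw [hqint, abs_lt] at k1
  rw [hq'int, abs_lt] at k2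
  have hub : ∑ j ∈ Finset.range N, (Int.fract (β * j + c) - 1/2)
      ≤ ∑ j ∈ Finset.range N, q (Int.fract (β * j + c)) :=
    Finset.sum_le_sum fun j _ => hmaj _
  have hlb : ∑ j ∈ Finset.range N, (1/2 - Int.fract (β * j + c))
      ≤ ∑ j ∈ Finset.range N, q' (Int.fract (β * j + c)) :=
    Finset.sum_le_sum fun j _ => hmaj' _
  have hneg : ∑ j ∈ Finset.range N, (1/2 - Int.fract (β * j + c))
      = -∑ j ∈ Finset.range N, (Int.fract (β * j + c) - 1/2) := by
    rw [← Finset.sum_neg_distrib]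
    exact Finset.sum_congr rfl fun j _ => by ring
  rw [abs_lt]
  constructor
  · have : ∑ j ∈ Finset.range N, q' (Int.fract (β * j + c)) < (N:ℝ) * (η/2) + ε/4 * N := by
      linarith [k2.2]
    have h5 : -∑ j ∈ Finset.range N, (Int.fract (β * j + c) - 1/2) < (N:ℝ) * (η/2) + ε/4 * N := by
      rw [← hneg]; linarith [hlb]
    have h6 : (N:ℝ) * (η/2) ≤ (N:ℝ) * (ε/4) :=
      mul_le_mul_of_nonneg_left (by linarith) hNpos.le
    linarith [h6, mul_pos hε hNpos]
  · have : ∑ j ∈ Finset.range N, q (Int.fract (β * j + c)) < (N:ℝ) * (η/2) + ε/4 * N := by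
      linarith [k1.2]
    have h6 : (N:ℝ) * (η/2) ≤ (N:ℝ) * (ε/4) :=
      mul_le_mul_of_nonneg_left (by linarith) hNpos.le
    linarith [h6, hub, mul_pos hε hNpos]


/-- The perturbations `δ*_n` associated with `β`. -/
noncomputable def deltaStar (β : ℝ) (n : ℤ) : ℝ :=
  if (1/2 : ℝ) ≤ Int.fract (β * (n : ℝ)) then ((⌊β * (n : ℝ)⌋ : ℝ) + 1) / β - n
  else (⌊β * (n : ℝ)⌋ : ℝ) / β - n

private lemma fract_add_half (x : ℝ) :
    Int.fract (x + 1/2)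
      = if (1/2 : ℝ) ≤ Int.fract x then Int.fract x - 1/2 else Int.fract x + 1/2 := by
  have hx : x + 1/2 = (⌊x⌋ : ℝ) + (Int.fract x + 1/2) := by
    have : Int.fract x = x - ⌊x⌋ := rfl
    rw [this]; ring
  rw [hx, Int.fract_intCast_add]
  have h0 : 0 ≤ Int.fract x := Int.fract_nonneg x
  have h1 : Int.fract x < 1 := Int.fract_lt_one x
  split_ifs with h
  · have hy : Int.fract x + 1/2 = ((1:ℤ) : ℝ) + (Int.fract x - 1/2) := by push_cast; ring
    rw [hy, Int.fract_intCast_add, Int.fract_eq_self.mpr ⟨by linarith, by linarith⟩]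
  · rw [Int.fract_eq_self.mpr ⟨by linarith, by linarith [not_le.mp h]⟩]

private lemma deltaStar_eq (β : ℝ) (hβpos : 0 < β) (n : ℤ) :
    deltaStar β n = (1/2 - Int.fract (β * n + 1/2)) / β := by
  have hβ : β ≠ 0 := ne_of_gt hβpos
  have hfr : Int.fract (β * n) = β * n - ⌊β * (n:ℝ)⌋ := rfl
  rw [deltaStar, fract_add_half]
  split_ifs with h
  · rw [hfr]; field_simp; ring
  · rw [hfr]; field_simp; ring

/-- For irrational `β`, the block averages of `δ*ₙ` tend to zero uniformly:
for every `ε > 0` there is `N₀` such that for all integers `m` and all `N > N₀`,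
`|(1/N)·∑_{n=mN+1}^{(m+1)N} δ*ₙ| < ε`. -/
theorem stmt_12 (β : ℝ) (hβpos : 0 < β) (hβirr : Irrational β) :
    ∀ ε : ℝ, 0 < ε → ∃ N₀ : ℕ, ∀ m : ℤ, ∀ N : ℕ, N₀ < N →
      |(1 / (N : ℝ)) *
        ∑ n ∈ Finset.Icc (m * (N : ℤ) + 1) ((m + 1) * (N : ℤ)), deltaStar β n| < ε := by
  intro ε hε
  obtain ⟨N₀, hkey⟩ := key_sawtooth β hβirr (ε * β) (mul_pos hε hβpos)
  refine ⟨N₀, fun m N hN => ?_⟩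
  have hNpos : (0:ℝ) < N := by
    have : 0 < N := Nat.pos_of_ne_zero (by omega)
    exact_mod_cast this
  set c : ℝ := β * ((m * N + 1 : ℤ) : ℝ) + 1/2 with hc
  have hre : Finset.Icc (m * (N:ℤ) + 1) ((m + 1) * (N:ℤ))
      = Finset.map ⟨fun j : ℕ => m * N + 1 + (j : ℤ),
          show Function.Injective (fun j : ℕ => m * (N:ℤ) + 1 + (j : ℤ)) from fun a b h => by
            have h' := add_left_cancel (show m * (N:ℤ) + 1 + a = m * N + 1 + b from h)
            exact_mod_cast h'⟩
          (Finset.range N) := by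
    have hprod : (m + 1) * (N:ℤ) = m * N + N := by ring
    rw [hprod]
    ext x
    simp only [Finset.mem_Icc, Finset.mem_map, Finset.mem_range, Function.Embedding.coeFn_mk]
    constructor
    · intro h
      exact ⟨(x - (m * N + 1)).toNat, by omega, by omega⟩
    · rintro ⟨j, hj, rfl⟩
      omega
  have hterm : ∀ j : ℕ, deltaStar β (m * N + 1 + (j:ℤ))
      = (1/2 - Int.fract (β * j + c)) / β := by
    intro j
    have harg : β * ((m * N + 1 + (j:ℤ) : ℤ) : ℝ) + 1/2 = β * (j:ℝ) + c := by
      rw [hc]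
      push_cast
      ring
    rw [deltaStar_eq β hβpos, harg]
  have hsum : ∑ n ∈ Finset.Icc (m * (N:ℤ) + 1) ((m + 1) * (N:ℤ)), deltaStar β n
      = -(∑ j ∈ Finset.range N, (Int.fract (β * j + c) - 1/2)) / β := by
    rw [hre, Finset.sum_map]
    simp only [Function.Embedding.coeFn_mk]
    calc ∑ j ∈ Finset.range N, deltaStar β (m * N + 1 + (j:ℤ))
        = ∑ j ∈ Finset.range N, (1/2 - Int.fract (β * j + c)) / β :=
          Finset.sum_congr rfl fun j _ => hterm j
      _ = (∑ j ∈ Finset.range N, (1/2 - Int.fract (β * j + c))) / β :=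
          (Finset.sum_div _ _ _).symm
      _ = -(∑ j ∈ Finset.range N, (Int.fract (β * j + c) - 1/2)) / β := by
          congr 1
          rw [← Finset.sum_neg_distrib]
          exact Finset.sum_congr rfl fun j _ => by ring
  rw [hsum]
  have hS := hkey c N hN
  have habs : |(1 / (N:ℝ)) * (-(∑ j ∈ Finset.range N, (Int.fract (β * j + c) - 1/2)) / β)|
      = |∑ j ∈ Finset.range N, (Int.fract (β * j + c) - 1/2)| / ((N:ℝ) * β) := by
    have h1 : |1/(N:ℝ)| = 1/(N:ℝ) := abs_of_pos (by positivity)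
    have h2 : |(-(∑ j ∈ Finset.range N, (Int.fract (β * j + c) - 1/2)))/β|
        = |∑ j ∈ Finset.range N, (Int.fract (β * j + c) - 1/2)|/β := by
      rw [abs_div, abs_neg, abs_of_pos hβpos]
    rw [abs_mul, h1, h2]
    ring
  rw [habs]
  rw [div_lt_iff₀ (mul_pos hNpos hβpos)]
  calc |∑ j ∈ Finset.range N, (Int.fract (β * j + c) - 1/2)| < ε * β * N := hS
    _ = ε * (N * β) := by ring

end WeylAux
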